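/- A closed short multicategory 𝔠 is left representable if and only if it has a nullary map classifier and, for each object b, the functor [b,−] : C → C (induced by the closed structure) has a left adjoint. -/

import Mathlib

open CategoryTheory

universe v u

/-- A *short multicategory* structure on a category `C` (Bourke–Lobbia).
The unary multimaps are exactly the morphisms of `C`; the functoriality of the
families of `n`-ary multimaps is encoded by the actions `map0, map2, map3, map4`
(pre- and post-composition with unary maps), and the substitution operations
`∘ᵢ` are given for the arities `(n,m) ∈ {(2,2),(3,2),(2,3),(2,0),(3,0)}`,
natural in each variable except the substituted one and dinatural in that one,
subject to the associativity and interchange equations. -/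
structure ShortMultiStruct (C : Type u) [Category.{v} C] where
  /-- nullary multimaps -/
  M0 : C → Type v
  /-- binary multimaps -/
  M2 : C → C → C → Type v
  /-- ternary multimaps -/
  M3 : C → C → C → C → Type v
  /-- 4-ary multimaps -/
  M4 : C → C → C → C → C → Type v
  /-- functorial action on nullary multimaps -/
  map0 : ∀ {b b' : C}, (b ⟶ b') → M0 b → M0 b'
  /-- functorial action on binary multimaps -/
  map2 : ∀ {a1' a1 a2' a2 b b' : C},
    (a1' ⟶ a1) → (a2' ⟶ a2) → (b ⟶ b') → M2 a1 a2 b → M2 a1' a2' b'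
  map3 : ∀ {a1' a1 a2' a2 a3' a3 b b' : C},
    (a1' ⟶ a1) → (a2' ⟶ a2) → (a3' ⟶ a3) → (b ⟶ b') → M3 a1 a2 a3 b → M3 a1' a2' a3' b'
  map4 : ∀ {a1' a1 a2' a2 a3' a3 a4' a4 b b' : C},
    (a1' ⟶ a1) → (a2' ⟶ a2) → (a3' ⟶ a3) → (a4' ⟶ a4) → (b ⟶ b') →
      M4 a1 a2 a3 a4 b → M4 a1' a2' a3' a4' b'
  map0_id : ∀ {b : C} (x : M0 b), map0 (𝟙 b) x = x
  map0_comp : ∀ {b b' b'' : C} (q : b ⟶ b') (q' : b' ⟶ b'') (x : M0 b),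
    map0 q' (map0 q x) = map0 (q ≫ q') x
  map2_id : ∀ {a1 a2 b : C} (x : M2 a1 a2 b), map2 (𝟙 a1) (𝟙 a2) (𝟙 b) x = x
  map2_comp : ∀ {a1'' a1' a1 a2'' a2' a2 b b' b'' : C}
    (p1' : a1'' ⟶ a1') (p1 : a1' ⟶ a1) (p2' : a2'' ⟶ a2') (p2 : a2' ⟶ a2)
    (q : b ⟶ b') (q' : b' ⟶ b'') (x : M2 a1 a2 b),
    map2 p1' p2' q' (map2 p1 p2 q x) = map2 (p1' ≫ p1) (p2' ≫ p2) (q ≫ q') x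
  map3_id : ∀ {a1 a2 a3 b : C} (x : M3 a1 a2 a3 b),
    map3 (𝟙 a1) (𝟙 a2) (𝟙 a3) (𝟙 b) x = x
  map3_comp : ∀ {a1'' a1' a1 a2'' a2' a2 a3'' a3' a3 b b' b'' : C}
    (p1' : a1'' ⟶ a1') (p1 : a1' ⟶ a1) (p2' : a2'' ⟶ a2') (p2 : a2' ⟶ a2)
    (p3' : a3'' ⟶ a3') (p3 : a3' ⟶ a3) (q : b ⟶ b') (q' : b' ⟶ b'') (x : M3 a1 a2 a3 b),
    map3 p1' p2' p3' q' (map3 p1 p2 p3 q x)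
      = map3 (p1' ≫ p1) (p2' ≫ p2) (p3' ≫ p3) (q ≫ q') x
  map4_id : ∀ {a1 a2 a3 a4 b : C} (x : M4 a1 a2 a3 a4 b),
    map4 (𝟙 a1) (𝟙 a2) (𝟙 a3) (𝟙 a4) (𝟙 b) x = x
  map4_comp : ∀ {a1'' a1' a1 a2'' a2' a2 a3'' a3' a3 a4'' a4' a4 b b' b'' : C}
    (p1' : a1'' ⟶ a1') (p1 : a1' ⟶ a1) (p2' : a2'' ⟶ a2') (p2 : a2' ⟶ a2)
    (p3' : a3'' ⟶ a3') (p3 : a3' ⟶ a3) (p4' : a4'' ⟶ a4') (p4 : a4' ⟶ a4)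
    (q : b ⟶ b') (q' : b' ⟶ b'') (x : M4 a1 a2 a3 a4 b),
    map4 p1' p2' p3' p4' q' (map4 p1 p2 p3 p4 q x)
      = map4 (p1' ≫ p1) (p2' ≫ p2) (p3' ≫ p3) (p4' ≫ p4) (q ≫ q') x
  /-- substitution of a binary multimap into the 1st variable of a binary multimap -/
  s22_1 : ∀ {b1 b2 c a1 a2 : C}, M2 b1 b2 c → M2 a1 a2 b1 → M3 a1 a2 b2 c
  /-- substitution of a binary multimap into the 2nd variable of a binary multimap -/
  s22_2 : ∀ {b1 b2 c a1 a2 : C}, M2 b1 b2 c → M2 a1 a2 b2 → M3 b1 a1 a2 c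
  /-- substitution of a binary multimap into the 1st variable of a ternary multimap -/
  s32_1 : ∀ {b1 b2 b3 c a1 a2 : C}, M3 b1 b2 b3 c → M2 a1 a2 b1 → M4 a1 a2 b2 b3 c
  s32_2 : ∀ {b1 b2 b3 c a1 a2 : C}, M3 b1 b2 b3 c → M2 a1 a2 b2 → M4 b1 a1 a2 b3 c
  s32_3 : ∀ {b1 b2 b3 c a1 a2 : C}, M3 b1 b2 b3 c → M2 a1 a2 b3 → M4 b1 b2 a1 a2 c
  /-- substitution of a ternary multimap into the 1st variable of a binary multimap -/
  s23_1 : ∀ {b1 b2 c a1 a2 a3 : C}, M2 b1 b2 c → M3 a1 a2 a3 b1 → M4 a1 a2 a3 b2 c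
  s23_2 : ∀ {b1 b2 c a1 a2 a3 : C}, M2 b1 b2 c → M3 a1 a2 a3 b2 → M4 b1 a1 a2 a3 c
  /-- substitution of a nullary multimap into the 1st variable of a binary multimap -/
  s20_1 : ∀ {b1 b2 c : C}, M2 b1 b2 c → M0 b1 → (b2 ⟶ c)
  s20_2 : ∀ {b1 b2 c : C}, M2 b1 b2 c → M0 b2 → (b1 ⟶ c)
  /-- substitution of a nullary multimap into the 1st variable of a ternary multimap -/
  s30_1 : ∀ {b1 b2 b3 c : C}, M3 b1 b2 b3 c → M0 b1 → M2 b2 b3 c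
  s30_2 : ∀ {b1 b2 b3 c : C}, M3 b1 b2 b3 c → M0 b2 → M2 b1 b3 c
  s30_3 : ∀ {b1 b2 b3 c : C}, M3 b1 b2 b3 c → M0 b3 → M2 b1 b2 c
  -- naturality and dinaturality of the substitutions
  s22_1_nat : ∀ {a1' a1 a2' a2 b1 b2' b2 c c' : C} (p1 : a1' ⟶ a1) (p2 : a2' ⟶ a2)
    (q : b2' ⟶ b2) (r : c ⟶ c') (g : M2 b1 b2 c) (f : M2 a1 a2 b1),
    map3 p1 p2 q r (s22_1 g f) = s22_1 (map2 (𝟙 b1) q r g) (map2 p1 p2 (𝟙 b1) f)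
  s22_1_dinat : ∀ {a1 a2 b1 b1' b2 c : C} (h : b1 ⟶ b1') (g : M2 b1' b2 c) (f : M2 a1 a2 b1),
    s22_1 (map2 h (𝟙 b2) (𝟙 c) g) f = s22_1 g (map2 (𝟙 a1) (𝟙 a2) h f)
  s22_2_nat : ∀ {a1' a1 a2' a2 b1' b1 b2 c c' : C} (p1 : a1' ⟶ a1) (p2 : a2' ⟶ a2)
    (q : b1' ⟶ b1) (r : c ⟶ c') (g : M2 b1 b2 c) (f : M2 a1 a2 b2),
    map3 q p1 p2 r (s22_2 g f) = s22_2 (map2 q (𝟙 b2) r g) (map2 p1 p2 (𝟙 b2) f)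
  s22_2_dinat : ∀ {a1 a2 b1 b2 b2' c : C} (h : b2 ⟶ b2') (g : M2 b1 b2' c) (f : M2 a1 a2 b2),
    s22_2 (map2 (𝟙 b1) h (𝟙 c) g) f = s22_2 g (map2 (𝟙 a1) (𝟙 a2) h f)
  s32_1_nat : ∀ {a1' a1 a2' a2 b1 b2' b2 b3' b3 c c' : C} (p1 : a1' ⟶ a1) (p2 : a2' ⟶ a2)
    (q2 : b2' ⟶ b2) (q3 : b3' ⟶ b3) (r : c ⟶ c') (g : M3 b1 b2 b3 c) (f : M2 a1 a2 b1),
    map4 p1 p2 q2 q3 r (s32_1 g f)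
      = s32_1 (map3 (𝟙 b1) q2 q3 r g) (map2 p1 p2 (𝟙 b1) f)
  s32_1_dinat : ∀ {a1 a2 b1 b1' b2 b3 c : C} (h : b1 ⟶ b1') (g : M3 b1' b2 b3 c)
    (f : M2 a1 a2 b1),
    s32_1 (map3 h (𝟙 b2) (𝟙 b3) (𝟙 c) g) f = s32_1 g (map2 (𝟙 a1) (𝟙 a2) h f)
  s32_2_nat : ∀ {a1' a1 a2' a2 b1' b1 b2 b3' b3 c c' : C} (p1 : a1' ⟶ a1) (p2 : a2' ⟶ a2)
    (q1 : b1' ⟶ b1) (q3 : b3' ⟶ b3) (r : c ⟶ c') (g : M3 b1 b2 b3 c) (f : M2 a1 a2 b2),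
    map4 q1 p1 p2 q3 r (s32_2 g f)
      = s32_2 (map3 q1 (𝟙 b2) q3 r g) (map2 p1 p2 (𝟙 b2) f)
  s32_2_dinat : ∀ {a1 a2 b1 b2 b2' b3 c : C} (h : b2 ⟶ b2') (g : M3 b1 b2' b3 c)
    (f : M2 a1 a2 b2),
    s32_2 (map3 (𝟙 b1) h (𝟙 b3) (𝟙 c) g) f = s32_2 g (map2 (𝟙 a1) (𝟙 a2) h f)
  s32_3_nat : ∀ {a1' a1 a2' a2 b1' b1 b2' b2 b3 c c' : C} (p1 : a1' ⟶ a1) (p2 : a2' ⟶ a2)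
    (q1 : b1' ⟶ b1) (q2 : b2' ⟶ b2) (r : c ⟶ c') (g : M3 b1 b2 b3 c) (f : M2 a1 a2 b3),
    map4 q1 q2 p1 p2 r (s32_3 g f)
      = s32_3 (map3 q1 q2 (𝟙 b3) r g) (map2 p1 p2 (𝟙 b3) f)
  s32_3_dinat : ∀ {a1 a2 b1 b2 b3 b3' c : C} (h : b3 ⟶ b3') (g : M3 b1 b2 b3' c)
    (f : M2 a1 a2 b3),
    s32_3 (map3 (𝟙 b1) (𝟙 b2) h (𝟙 c) g) f = s32_3 g (map2 (𝟙 a1) (𝟙 a2) h f)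
  s23_1_nat : ∀ {a1' a1 a2' a2 a3' a3 b1 b2' b2 c c' : C}
    (p1 : a1' ⟶ a1) (p2 : a2' ⟶ a2) (p3 : a3' ⟶ a3) (q : b2' ⟶ b2) (r : c ⟶ c')
    (g : M2 b1 b2 c) (f : M3 a1 a2 a3 b1),
    map4 p1 p2 p3 q r (s23_1 g f)
      = s23_1 (map2 (𝟙 b1) q r g) (map3 p1 p2 p3 (𝟙 b1) f)
  s23_1_dinat : ∀ {a1 a2 a3 b1 b1' b2 c : C} (h : b1 ⟶ b1') (g : M2 b1' b2 c)
    (f : M3 a1 a2 a3 b1),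
    s23_1 (map2 h (𝟙 b2) (𝟙 c) g) f = s23_1 g (map3 (𝟙 a1) (𝟙 a2) (𝟙 a3) h f)
  s23_2_nat : ∀ {a1' a1 a2' a2 a3' a3 b1' b1 b2 c c' : C}
    (p1 : a1' ⟶ a1) (p2 : a2' ⟶ a2) (p3 : a3' ⟶ a3) (q : b1' ⟶ b1) (r : c ⟶ c')
    (g : M2 b1 b2 c) (f : M3 a1 a2 a3 b2),
    map4 q p1 p2 p3 r (s23_2 g f)
      = s23_2 (map2 q (𝟙 b2) r g) (map3 p1 p2 p3 (𝟙 b2) f)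
  s23_2_dinat : ∀ {a1 a2 a3 b1 b2 b2' c : C} (h : b2 ⟶ b2') (g : M2 b1 b2' c)
    (f : M3 a1 a2 a3 b2),
    s23_2 (map2 (𝟙 b1) h (𝟙 c) g) f = s23_2 g (map3 (𝟙 a1) (𝟙 a2) (𝟙 a3) h f)
  s20_1_nat : ∀ {b1 b2' b2 c c' : C} (q : b2' ⟶ b2) (r : c ⟶ c')
    (g : M2 b1 b2 c) (u : M0 b1),
    q ≫ s20_1 g u ≫ r = s20_1 (map2 (𝟙 b1) q r g) u
  s20_1_dinat : ∀ {b1 b1' b2 c : C} (h : b1 ⟶ b1') (g : M2 b1' b2 c) (u : M0 b1),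
    s20_1 (map2 h (𝟙 b2) (𝟙 c) g) u = s20_1 g (map0 h u)
  s20_2_nat : ∀ {b1' b1 b2 c c' : C} (q : b1' ⟶ b1) (r : c ⟶ c')
    (g : M2 b1 b2 c) (u : M0 b2),
    q ≫ s20_2 g u ≫ r = s20_2 (map2 q (𝟙 b2) r g) u
  s20_2_dinat : ∀ {b1 b2 b2' c : C} (h : b2 ⟶ b2') (g : M2 b1 b2' c) (u : M0 b2),
    s20_2 (map2 (𝟙 b1) h (𝟙 c) g) u = s20_2 g (map0 h u)
  s30_1_nat : ∀ {b1 b2' b2 b3' b3 c c' : C} (q2 : b2' ⟶ b2) (q3 : b3' ⟶ b3) (r : c ⟶ c')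
    (g : M3 b1 b2 b3 c) (u : M0 b1),
    map2 q2 q3 r (s30_1 g u) = s30_1 (map3 (𝟙 b1) q2 q3 r g) u
  s30_1_dinat : ∀ {b1 b1' b2 b3 c : C} (h : b1 ⟶ b1') (g : M3 b1' b2 b3 c) (u : M0 b1),
    s30_1 (map3 h (𝟙 b2) (𝟙 b3) (𝟙 c) g) u = s30_1 g (map0 h u)
  s30_2_nat : ∀ {b1' b1 b2 b3' b3 c c' : C} (q1 : b1' ⟶ b1) (q3 : b3' ⟶ b3) (r : c ⟶ c')
    (g : M3 b1 b2 b3 c) (u : M0 b2),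
    map2 q1 q3 r (s30_2 g u) = s30_2 (map3 q1 (𝟙 b2) q3 r g) u
  s30_2_dinat : ∀ {b1 b2 b2' b3 c : C} (h : b2 ⟶ b2') (g : M3 b1 b2' b3 c) (u : M0 b2),
    s30_2 (map3 (𝟙 b1) h (𝟙 b3) (𝟙 c) g) u = s30_2 g (map0 h u)
  s30_3_nat : ∀ {b1' b1 b2' b2 b3 c c' : C} (q1 : b1' ⟶ b1) (q2 : b2' ⟶ b2) (r : c ⟶ c')
    (g : M3 b1 b2 b3 c) (u : M0 b3),
    map2 q1 q2 r (s30_3 g u) = s30_3 (map3 q1 q2 (𝟙 b3) r g) u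
  s30_3_dinat : ∀ {b1 b2 b3 b3' c : C} (h : b3 ⟶ b3') (g : M3 b1 b2 b3' c) (u : M0 b3),
    s30_3 (map3 (𝟙 b1) (𝟙 b2) h (𝟙 c) g) u = s30_3 g (map0 h u)
  -- associativity equations `f ∘ᵢ (g ∘ⱼ h) = (f ∘ᵢ g) ∘_{j+i-1} h`, `f, g` binary:
  -- (a) `h` binary
  assoc_a_11 : ∀ {x1 x2 c b1 b2 a1 a2 : C} (f : M2 x1 x2 c) (g : M2 b1 b2 x1)
    (h : M2 a1 a2 b1), s23_1 f (s22_1 g h) = s32_1 (s22_1 f g) h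
  assoc_a_12 : ∀ {x1 x2 c b1 b2 a1 a2 : C} (f : M2 x1 x2 c) (g : M2 b1 b2 x1)
    (h : M2 a1 a2 b2), s23_1 f (s22_2 g h) = s32_2 (s22_1 f g) h
  assoc_a_21 : ∀ {x1 x2 c b1 b2 a1 a2 : C} (f : M2 x1 x2 c) (g : M2 b1 b2 x2)
    (h : M2 a1 a2 b1), s23_2 f (s22_1 g h) = s32_2 (s22_2 f g) h
  assoc_a_22 : ∀ {x1 x2 c b1 b2 a1 a2 : C} (f : M2 x1 x2 c) (g : M2 b1 b2 x2)
    (h : M2 a1 a2 b2), s23_2 f (s22_2 g h) = s32_3 (s22_2 f g) h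
  -- (b) `h` nullary
  assoc_b_11 : ∀ {x1 x2 c b1 b2 : C} (f : M2 x1 x2 c) (g : M2 b1 b2 x1) (u : M0 b1),
    map2 (s20_1 g u) (𝟙 x2) (𝟙 c) f = s30_1 (s22_1 f g) u
  assoc_b_12 : ∀ {x1 x2 c b1 b2 : C} (f : M2 x1 x2 c) (g : M2 b1 b2 x1) (u : M0 b2),
    map2 (s20_2 g u) (𝟙 x2) (𝟙 c) f = s30_2 (s22_1 f g) u
  assoc_b_21 : ∀ {x1 x2 c b1 b2 : C} (f : M2 x1 x2 c) (g : M2 b1 b2 x2) (u : M0 b1),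
    map2 (𝟙 x1) (s20_1 g u) (𝟙 c) f = s30_2 (s22_2 f g) u
  assoc_b_22 : ∀ {x1 x2 c b1 b2 : C} (f : M2 x1 x2 c) (g : M2 b1 b2 x2) (u : M0 b2),
    map2 (𝟙 x1) (s20_2 g u) (𝟙 c) f = s30_3 (s22_2 f g) u
  -- interchange equations `(f ∘₁ g) ∘_{n+1} h = (f ∘₂ h) ∘₁ g`, `f` binary:
  inter_a : ∀ {x1 x2 c a1 a2 b1 b2 : C} (f : M2 x1 x2 c) (g : M2 a1 a2 x1)
    (h : M2 b1 b2 x2), s32_3 (s22_1 f g) h = s32_1 (s22_2 f h) g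
  inter_b : ∀ {x1 x2 c a1 a2 : C} (f : M2 x1 x2 c) (g : M2 a1 a2 x1) (u : M0 x2),
    s30_3 (s22_1 f g) u = map2 (𝟙 a1) (𝟙 a2) (s20_2 f u) g
  inter_c : ∀ {x1 x2 c b1 b2 : C} (f : M2 x1 x2 c) (h : M2 b1 b2 x2) (u : M0 x1),
    map2 (𝟙 b1) (𝟙 b2) (s20_1 f u) h = s30_1 (s22_2 f h) u
  inter_d : ∀ {x1 x2 c : C} (f : M2 x1 x2 c) (u : M0 x1) (v : M0 x2),
    map0 (s20_1 f u) v = map0 (s20_2 f v) u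

namespace ShortMultiStruct

variable {C : Type u} [Category.{v} C] (S : ShortMultiStruct C)

/-- `θ ∈ 𝔠₂(a,b; t)` is a binary map classifier if substitution of `θ` into unary
multimaps is bijective. -/
def IsBinClassifier {a b t : C} (θ : S.M2 a b t) : Prop :=
  ∀ c : C, Function.Bijective (fun p : t ⟶ c => S.map2 (𝟙 a) (𝟙 b) p θ)

/-- A binary map classifier is *left universal* if substitution into the first
variable of binary and ternary multimaps is also bijective. -/
def IsLeftUniversalBin {a b t : C} (θ : S.M2 a b t) : Prop :=
  S.IsBinClassifier θ ∧
  (∀ x d : C, Function.Bijective (fun g : S.M2 t x d => S.s22_1 g θ)) ∧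
  (∀ x y d : C, Function.Bijective (fun g : S.M3 t x y d => S.s32_1 g θ))

/-- `u ∈ 𝔠₀(; i)` is a nullary map classifier if substitution of `u` into unary
multimaps is bijective. -/
def IsNulClassifier {i : C} (u : S.M0 i) : Prop :=
  ∀ b : C, Function.Bijective (fun p : i ⟶ b => S.map0 p u)

/-- A nullary map classifier is *left universal* if substitution into the first
variable of binary and ternary multimaps is also bijective. -/
def IsLeftUniversalNul {i : C} (u : S.M0 i) : Prop :=
  S.IsNulClassifier u ∧
  (∀ x d : C, Function.Bijective (fun g : S.M2 i x d => S.s20_1 g u)) ∧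
  (∀ x y d : C, Function.Bijective (fun g : S.M3 i x y d => S.s30_1 g u))

/-- A short multicategory is *left representable* if it admits left universal
nullary and binary map classifiers. -/
def LeftRepresentable : Prop :=
  (∀ a b : C, ∃ (t : C) (θ : S.M2 a b t), S.IsLeftUniversalBin θ) ∧
  (∃ (i : C) (u : S.M0 i), S.IsLeftUniversalNul u)

/-- A binary map classifier is part of a *representable* structure when substitution
with it in every position of `n`-ary multimaps, `1 ≤ n ≤ 3`, is bijective. -/
def IsRepBin {a b t : C} (θ : S.M2 a b t) : Prop :=
  S.IsBinClassifier θ ∧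
  (∀ x d : C, Function.Bijective (fun g : S.M2 t x d => S.s22_1 g θ)) ∧
  (∀ x d : C, Function.Bijective (fun g : S.M2 x t d => S.s22_2 g θ)) ∧
  (∀ x y d : C, Function.Bijective (fun g : S.M3 t x y d => S.s32_1 g θ)) ∧
  (∀ x y d : C, Function.Bijective (fun g : S.M3 x t y d => S.s32_2 g θ)) ∧
  (∀ x y d : C, Function.Bijective (fun g : S.M3 x y t d => S.s32_3 g θ))

/-- A nullary map classifier is part of a *representable* structure when substitution
with it in every position of `n`-ary multimaps, `1 ≤ n ≤ 3`, is bijective. -/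
def IsRepNul {i : C} (u : S.M0 i) : Prop :=
  S.IsNulClassifier u ∧
  (∀ x d : C, Function.Bijective (fun g : S.M2 i x d => S.s20_1 g u)) ∧
  (∀ x d : C, Function.Bijective (fun g : S.M2 x i d => S.s20_2 g u)) ∧
  (∀ x y d : C, Function.Bijective (fun g : S.M3 i x y d => S.s30_1 g u)) ∧
  (∀ x y d : C, Function.Bijective (fun g : S.M3 x i y d => S.s30_2 g u)) ∧
  (∀ x y d : C, Function.Bijective (fun g : S.M3 x y i d => S.s30_3 g u))

/-- A short multicategory is *representable* if it admits nullary and binary map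
classifiers for which substitution in every position is bijective. -/
def Representable : Prop :=
  (∀ a b : C, ∃ (t : C) (θ : S.M2 a b t), S.IsRepBin θ) ∧
  (∃ (i : C) (u : S.M0 i), S.IsRepNul u)

/-- `e ∈ 𝔠₂([b,c], b; c)` exhibits `h = [b,c]` as an internal hom when substitution
into the first variable of `e` induces bijections `𝔠ₙ(x̄;[b,c]) ≅ 𝔠ₙ₊₁(x̄,b;c)`
for `n = 0,1,2,3`. -/
def IsHomObj {b c h : C} (e : S.M2 h b c) : Prop :=
  Function.Bijective (fun v : S.M0 h => S.s20_1 e v) ∧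
  (∀ x : C, Function.Bijective (fun p : x ⟶ h => S.map2 p (𝟙 b) (𝟙 c) e)) ∧
  (∀ x y : C, Function.Bijective (fun g : S.M2 x y h => S.s22_1 e g)) ∧
  (∀ x y z : C, Function.Bijective (fun g : S.M3 x y z h => S.s23_1 e g))

/-- A short multicategory is *closed* when every pair of objects admits an
internal hom. -/
def Closed : Prop := ∀ b c : C, ∃ (h : C) (e : S.M2 h b c), S.IsHomObj e

end ShortMultiStruct

namespace ShortMultiStruct

variable {C : Type u} [Category.{v} C] (S : ShortMultiStruct C)

/-- The internal-hom functor `[b,-] : C ⥤ C` induced by a closed structure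
`(H, e)` on a short multicategory: `[b,g]` is the unique unary map with
`e_{b,c'} ∘₁ [b,g] = g ∘ e_{b,c}`. -/
noncomputable def homFunctor (H : C → C → C) (e : ∀ b c : C, S.M2 (H b c) b c)
    (he : ∀ b c : C, S.IsHomObj (e b c)) (b : C) : C ⥤ C where
  obj c := H b c
  map {c c'} g := (Equiv.ofBijective _ ((he b c').2.1 (H b c))).symm
      (S.map2 (𝟙 (H b c)) (𝟙 b) g (e b c))
  map_id c := by
    rw [Equiv.symm_apply_eq, Equiv.ofBijective_apply]
  map_comp {c c' c''} g g' := by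
    rw [Equiv.symm_apply_eq, Equiv.ofBijective_apply]
    have hp : S.map2 ((Equiv.ofBijective _ ((he b c').2.1 (H b c))).symm
        (S.map2 (𝟙 (H b c)) (𝟙 b) g (e b c))) (𝟙 b) (𝟙 c') (e b c')
        = S.map2 (𝟙 (H b c)) (𝟙 b) g (e b c) := by
      conv_rhs => rw [← Equiv.apply_symm_apply
        (Equiv.ofBijective _ ((he b c').2.1 (H b c)))
        (S.map2 (𝟙 (H b c)) (𝟙 b) g (e b c))]
      rfl
    have hp' : S.map2 ((Equiv.ofBijective _ ((he b c'').2.1 (H b c'))).symm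
        (S.map2 (𝟙 (H b c')) (𝟙 b) g' (e b c'))) (𝟙 b) (𝟙 c'') (e b c'')
        = S.map2 (𝟙 (H b c')) (𝟙 b) g' (e b c') := by
      conv_rhs => rw [← Equiv.apply_symm_apply
        (Equiv.ofBijective _ ((he b c'').2.1 (H b c')))
        (S.map2 (𝟙 (H b c')) (𝟙 b) g' (e b c'))]
      rfl
    calc S.map2 (𝟙 (H b c)) (𝟙 b) (g ≫ g') (e b c)
        = S.map2 (𝟙 (H b c)) (𝟙 b) g' (S.map2 (𝟙 (H b c)) (𝟙 b) g (e b c)) := by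
          rw [S.map2_comp]; simp
      _ = S.map2 (𝟙 (H b c)) (𝟙 b) g'
            (S.map2 ((Equiv.ofBijective _ ((he b c').2.1 (H b c))).symm
              (S.map2 (𝟙 (H b c)) (𝟙 b) g (e b c))) (𝟙 b) (𝟙 c') (e b c')) := by
          rw [hp]
      _ = S.map2 (((Equiv.ofBijective _ ((he b c').2.1 (H b c))).symm
              (S.map2 (𝟙 (H b c)) (𝟙 b) g (e b c)))) (𝟙 b) (𝟙 c'')
            (S.map2 (𝟙 (H b c')) (𝟙 b) g' (e b c')) := by
          rw [S.map2_comp, S.map2_comp]; simp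
      _ = S.map2 (((Equiv.ofBijective _ ((he b c').2.1 (H b c))).symm
              (S.map2 (𝟙 (H b c)) (𝟙 b) g (e b c)))) (𝟙 b) (𝟙 c'')
            (S.map2 ((Equiv.ofBijective _ ((he b c'').2.1 (H b c'))).symm
              (S.map2 (𝟙 (H b c')) (𝟙 b) g' (e b c'))) (𝟙 b) (𝟙 c'') (e b c'')) := by
          rw [hp']
      _ = S.map2 ((Equiv.ofBijective _ ((he b c').2.1 (H b c))).symm
              (S.map2 (𝟙 (H b c)) (𝟙 b) g (e b c)) ≫
            (Equiv.ofBijective _ ((he b c'').2.1 (H b c'))).symm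
              (S.map2 (𝟙 (H b c')) (𝟙 b) g' (e b c'))) (𝟙 b) (𝟙 c'') (e b c'') := by
          rw [S.map2_comp]; simp

end ShortMultiStruct


namespace ShortMultiStruct

section Aux

variable {C : Type u} [Category.{v} C] (S : ShortMultiStruct C)
variable (H : C → C → C) (e : ∀ b c : C, S.M2 (H b c) b c)
variable (he : ∀ b c : C, S.IsHomObj (e b c))

/-- The defining property of `homFunctor`'s action on morphisms. -/
lemma homFunctor_map_spec {b c c' : C} (g : c ⟶ c') :
    S.map2 ((S.homFunctor H e he b).map g) (𝟙 b) (𝟙 c') (e b c')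
      = S.map2 (𝟙 (H b c)) (𝟙 b) g (e b c) :=
  (Equiv.ofBijective _ ((he b c').2.1 (H b c))).apply_symm_apply _

lemma phi1_symm_spec {b c x : C} (g : S.M2 x b c) :
    S.map2 ((Equiv.ofBijective _ ((he b c).2.1 x)).symm g) (𝟙 b) (𝟙 c) (e b c) = g :=
  (Equiv.ofBijective _ ((he b c).2.1 x)).apply_symm_apply g

lemma phi2_symm_spec {b c x y : C} (g : S.M3 x y b c) :
    S.s22_1 (e b c) ((Equiv.ofBijective _ ((he b c).2.2.1 x y)).symm g) = g :=
  (Equiv.ofBijective _ ((he b c).2.2.1 x y)).apply_symm_apply g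

/-- Forward direction: a left representable structure yields left adjoints. -/
lemma leftAdjoint_of_leftRep
    (hrep : ∀ a b : C, ∃ (t : C) (θ : S.M2 a b t), S.IsLeftUniversalBin θ) (b : C) :
    ∃ L : C ⥤ C, Nonempty (L ⊣ S.homFunctor H e he b) := by
  choose t θ hθ using fun a => hrep a b
  refine ⟨Adjunction.leftAdjointOfEquiv (G := S.homFunctor H e he b) (F_obj := t)
      (fun a c => (Equiv.ofBijective _ ((hθ a).1 c)).trans
        (Equiv.ofBijective _ ((he b c).2.1 a)).symm) ?_,
    ⟨Adjunction.adjunctionOfEquivLeft _ _⟩⟩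
  intro a c c' g h
  show (Equiv.ofBijective _ ((he b c').2.1 a)).symm (S.map2 (𝟙 a) (𝟙 b) (h ≫ g) (θ a))
    = (Equiv.ofBijective _ ((he b c).2.1 a)).symm (S.map2 (𝟙 a) (𝟙 b) h (θ a))
      ≫ (S.homFunctor H e he b).map g
  refine (Equiv.symm_apply_eq _).2 ?_
  show S.map2 (𝟙 a) (𝟙 b) (h ≫ g) (θ a)
    = S.map2 ((Equiv.ofBijective _ ((he b c).2.1 a)).symm (S.map2 (𝟙 a) (𝟙 b) h (θ a))
        ≫ (S.homFunctor H e he b).map g) (𝟙 b) (𝟙 c') (e b c')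
  calc S.map2 (𝟙 a) (𝟙 b) (h ≫ g) (θ a)
      = S.map2 (𝟙 a) (𝟙 b) g (S.map2 (𝟙 a) (𝟙 b) h (θ a)) := by
        rw [S.map2_comp]; simp
    _ = S.map2 (𝟙 a) (𝟙 b) g
          (S.map2 ((Equiv.ofBijective _ ((he b c).2.1 a)).symm
            (S.map2 (𝟙 a) (𝟙 b) h (θ a))) (𝟙 b) (𝟙 c) (e b c)) := by
        rw [S.phi1_symm_spec H e he]
    _ = S.map2 ((Equiv.ofBijective _ ((he b c).2.1 a)).symm
            (S.map2 (𝟙 a) (𝟙 b) h (θ a))) (𝟙 b) (𝟙 c')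
          (S.map2 (𝟙 (H b c)) (𝟙 b) g (e b c)) := by
        rw [S.map2_comp, S.map2_comp]; simp
    _ = S.map2 ((Equiv.ofBijective _ ((he b c).2.1 a)).symm
            (S.map2 (𝟙 a) (𝟙 b) h (θ a))) (𝟙 b) (𝟙 c')
          (S.map2 ((S.homFunctor H e he b).map g) (𝟙 b) (𝟙 c') (e b c')) := by
        exact congrArg (S.map2 _ (𝟙 b) (𝟙 c')) (S.homFunctor_map_spec H e he g).symm
    _ = S.map2 ((Equiv.ofBijective _ ((he b c).2.1 a)).symm
            (S.map2 (𝟙 a) (𝟙 b) h (θ a)) ≫ (S.homFunctor H e he b).map g)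
          (𝟙 b) (𝟙 c') (e b c') := by
        exact (S.map2_comp _ _ _ _ _ _ _).trans (by simp)

/-- Backward direction, binary classifiers from an adjunction. -/
lemma leftUnivBin_of_adj {b : C} {L : C ⥤ C} (adj : L ⊣ S.homFunctor H e he b) (a : C) :
    ∃ (t : C) (θ : S.M2 a b t), S.IsLeftUniversalBin θ := by
  set T := L.obj a with hT
  set η : a ⟶ H b T := adj.unit.app a with hη
  refine ⟨T, S.map2 η (𝟙 b) (𝟙 T) (e b T), ?_, ?_, ?_⟩
  · -- binary classifier
    intro c
    have hfun : (fun p : T ⟶ c => S.map2 (𝟙 a) (𝟙 b) p (S.map2 η (𝟙 b) (𝟙 T) (e b T)))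
        = (fun q : a ⟶ H b c => S.map2 q (𝟙 b) (𝟙 c) (e b c)) ∘ (adj.homEquiv a c) := by
      funext p
      have h1 : (adj.homEquiv a c) p = η ≫ (S.homFunctor H e he b).map p :=
        adj.homEquiv_unit _ _ _
      show S.map2 (𝟙 a) (𝟙 b) p (S.map2 η (𝟙 b) (𝟙 T) (e b T))
        = S.map2 ((adj.homEquiv a c) p) (𝟙 b) (𝟙 c) (e b c)
      rw [h1]
      calc S.map2 (𝟙 a) (𝟙 b) p (S.map2 η (𝟙 b) (𝟙 T) (e b T))
          = S.map2 η (𝟙 b) p (e b T) := by rw [S.map2_comp]; simp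
        _ = S.map2 η (𝟙 b) (𝟙 c) (S.map2 (𝟙 (H b T)) (𝟙 b) p (e b T)) := by
            rw [S.map2_comp]; simp
        _ = S.map2 η (𝟙 b) (𝟙 c)
              (S.map2 ((S.homFunctor H e he b).map p) (𝟙 b) (𝟙 c) (e b c)) := by
            exact congrArg (S.map2 η (𝟙 b) _) (S.homFunctor_map_spec H e he p).symm
        _ = S.map2 (η ≫ (S.homFunctor H e he b).map p) (𝟙 b) (𝟙 c) (e b c) := by
            exact (S.map2_comp _ _ _ _ _ _ _).trans (by simp)
    rw [hfun]
    exact ((he b c).2.1 a).comp (adj.homEquiv a c).bijective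
  · -- left universal, n = 1
    intro x d
    have hcl : Function.Bijective
        (fun p : T ⟶ H x d => S.map2 (𝟙 a) (𝟙 b) p (S.map2 η (𝟙 b) (𝟙 T) (e b T))) := by
      have hfun : (fun p : T ⟶ H x d =>
            S.map2 (𝟙 a) (𝟙 b) p (S.map2 η (𝟙 b) (𝟙 T) (e b T)))
          = (fun q : a ⟶ H b (H x d) => S.map2 q (𝟙 b) (𝟙 (H x d)) (e b (H x d)))
            ∘ (adj.homEquiv a (H x d)) := by
        funext p
        have h1 : (adj.homEquiv a (H x d)) p = η ≫ (S.homFunctor H e he b).map p :=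
          adj.homEquiv_unit _ _ _
        show S.map2 (𝟙 a) (𝟙 b) p (S.map2 η (𝟙 b) (𝟙 T) (e b T))
          = S.map2 ((adj.homEquiv a (H x d)) p) (𝟙 b) (𝟙 (H x d)) (e b (H x d))
        rw [h1]
        calc S.map2 (𝟙 a) (𝟙 b) p (S.map2 η (𝟙 b) (𝟙 T) (e b T))
            = S.map2 η (𝟙 b) p (e b T) := by rw [S.map2_comp]; simp
          _ = S.map2 η (𝟙 b) (𝟙 (H x d)) (S.map2 (𝟙 (H b T)) (𝟙 b) p (e b T)) := by
              rw [S.map2_comp]; simp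
          _ = S.map2 η (𝟙 b) (𝟙 (H x d))
                (S.map2 ((S.homFunctor H e he b).map p) (𝟙 b) (𝟙 (H x d))
                  (e b (H x d))) := by
              exact congrArg (S.map2 η (𝟙 b) _) (S.homFunctor_map_spec H e he p).symm
          _ = S.map2 (η ≫ (S.homFunctor H e he b).map p) (𝟙 b) (𝟙 (H x d))
                (e b (H x d)) := by
              exact (S.map2_comp _ _ _ _ _ _ _).trans (by simp)
      rw [hfun]
      exact ((he b (H x d)).2.1 a).comp (adj.homEquiv a (H x d)).bijective
    have hfun : (fun g : S.M2 T x d => S.s22_1 g (S.map2 η (𝟙 b) (𝟙 T) (e b T)))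
        = (fun ψ : S.M2 a b (H x d) => S.s22_1 (e x d) ψ)
          ∘ (fun q : T ⟶ H x d => S.map2 (𝟙 a) (𝟙 b) q (S.map2 η (𝟙 b) (𝟙 T) (e b T)))
          ∘ (Equiv.ofBijective _ ((he x d).2.1 T)).symm := by
      funext g
      show S.s22_1 g (S.map2 η (𝟙 b) (𝟙 T) (e b T))
        = S.s22_1 (e x d) (S.map2 (𝟙 a) (𝟙 b)
            ((Equiv.ofBijective _ ((he x d).2.1 T)).symm g)
            (S.map2 η (𝟙 b) (𝟙 T) (e b T)))
      conv_lhs => rw [← S.phi1_symm_spec H e he g]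
      exact S.s22_1_dinat _ _ _
    rw [hfun]
    exact ((he x d).2.2.1 a b).comp (hcl.comp (Equiv.bijective _))
  · -- left universal, n = 2
    intro x y d
    -- first redo the n = 1 statement for target `H y d`
    have hn1 : Function.Bijective
        (fun g : S.M2 T x (H y d) => S.s22_1 g (S.map2 η (𝟙 b) (𝟙 T) (e b T))) := by
      have hcl : Function.Bijective (fun p : T ⟶ H x (H y d) =>
          S.map2 (𝟙 a) (𝟙 b) p (S.map2 η (𝟙 b) (𝟙 T) (e b T))) := by
        have hfun : (fun p : T ⟶ H x (H y d) =>
              S.map2 (𝟙 a) (𝟙 b) p (S.map2 η (𝟙 b) (𝟙 T) (e b T)))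
            = (fun q : a ⟶ H b (H x (H y d)) =>
                S.map2 q (𝟙 b) (𝟙 (H x (H y d))) (e b (H x (H y d))))
              ∘ (adj.homEquiv a (H x (H y d))) := by
          funext p
          have h1 : (adj.homEquiv a (H x (H y d))) p
              = η ≫ (S.homFunctor H e he b).map p := adj.homEquiv_unit _ _ _
          show S.map2 (𝟙 a) (𝟙 b) p (S.map2 η (𝟙 b) (𝟙 T) (e b T))
            = S.map2 ((adj.homEquiv a (H x (H y d))) p) (𝟙 b) (𝟙 (H x (H y d)))
                (e b (H x (H y d)))
          rw [h1]
          calc S.map2 (𝟙 a) (𝟙 b) p (S.map2 η (𝟙 b) (𝟙 T) (e b T))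
              = S.map2 η (𝟙 b) p (e b T) := by rw [S.map2_comp]; simp
            _ = S.map2 η (𝟙 b) (𝟙 (H x (H y d)))
                  (S.map2 (𝟙 (H b T)) (𝟙 b) p (e b T)) := by
                rw [S.map2_comp]; simp
            _ = S.map2 η (𝟙 b) (𝟙 (H x (H y d)))
                  (S.map2 ((S.homFunctor H e he b).map p) (𝟙 b) (𝟙 (H x (H y d)))
                    (e b (H x (H y d)))) := by
                exact congrArg (S.map2 η (𝟙 b) _) (S.homFunctor_map_spec H e he p).symm
            _ = S.map2 (η ≫ (S.homFunctor H e he b).map p) (𝟙 b) (𝟙 (H x (H y d)))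
                  (e b (H x (H y d))) := by
                exact (S.map2_comp _ _ _ _ _ _ _).trans (by simp)
        rw [hfun]
        exact ((he b (H x (H y d))).2.1 a).comp (adj.homEquiv a (H x (H y d))).bijective
      have hfun : (fun g : S.M2 T x (H y d) =>
            S.s22_1 g (S.map2 η (𝟙 b) (𝟙 T) (e b T)))
          = (fun ψ : S.M2 a b (H x (H y d)) => S.s22_1 (e x (H y d)) ψ)
            ∘ (fun q : T ⟶ H x (H y d) =>
                S.map2 (𝟙 a) (𝟙 b) q (S.map2 η (𝟙 b) (𝟙 T) (e b T)))
            ∘ (Equiv.ofBijective _ ((he x (H y d)).2.1 T)).symm := by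
        funext g
        show S.s22_1 g (S.map2 η (𝟙 b) (𝟙 T) (e b T))
          = S.s22_1 (e x (H y d)) (S.map2 (𝟙 a) (𝟙 b)
              ((Equiv.ofBijective _ ((he x (H y d)).2.1 T)).symm g)
              (S.map2 η (𝟙 b) (𝟙 T) (e b T)))
        conv_lhs => rw [← S.phi1_symm_spec H e he g]
        exact S.s22_1_dinat _ _ _
      rw [hfun]
      exact ((he x (H y d)).2.2.1 a b).comp (hcl.comp (Equiv.bijective _))
    have hfun : (fun g : S.M3 T x y d => S.s32_1 g (S.map2 η (𝟙 b) (𝟙 T) (e b T)))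
        = (fun m : S.M3 a b x (H y d) => S.s23_1 (e y d) m)
          ∘ (fun g' : S.M2 T x (H y d) => S.s22_1 g' (S.map2 η (𝟙 b) (𝟙 T) (e b T)))
          ∘ (Equiv.ofBijective _ ((he y d).2.2.1 T x)).symm := by
      funext g
      show S.s32_1 g (S.map2 η (𝟙 b) (𝟙 T) (e b T))
        = S.s23_1 (e y d) (S.s22_1 ((Equiv.ofBijective _ ((he y d).2.2.1 T x)).symm g)
            (S.map2 η (𝟙 b) (𝟙 T) (e b T)))
      conv_lhs => rw [← S.phi2_symm_spec H e he g]
      exact (S.assoc_a_11 _ _ _).symm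
    rw [hfun]
    exact ((he y d).2.2.2 a b x).comp (hn1.comp (Equiv.bijective _))

include H e he

/-- Backward direction, upgrading a nullary classifier to a left universal one. -/
lemma leftUnivNul_of_closed {i : C} {u : S.M0 i} (hu : S.IsNulClassifier u) :
    S.IsLeftUniversalNul u := by
  have hn1 : ∀ x d : C, Function.Bijective (fun g : S.M2 i x d => S.s20_1 g u) := by
    intro x d
    have hfun : (fun g : S.M2 i x d => S.s20_1 g u)
        = (fun v : S.M0 (H x d) => S.s20_1 (e x d) v)
          ∘ (fun q : i ⟶ H x d => S.map0 q u)
          ∘ (Equiv.ofBijective _ ((he x d).2.1 i)).symm := by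
      funext g
      show S.s20_1 g u
        = S.s20_1 (e x d) (S.map0 ((Equiv.ofBijective _ ((he x d).2.1 i)).symm g) u)
      conv_lhs => rw [← S.phi1_symm_spec H e he g]
      exact S.s20_1_dinat _ _ _
    rw [hfun]
    exact ((he x d).1).comp ((hu (H x d)).comp (Equiv.bijective _))
  refine ⟨hu, hn1, ?_⟩
  intro x y d
  have hfun : (fun g : S.M3 i x y d => S.s30_1 g u)
      = (fun q : x ⟶ H y d => S.map2 q (𝟙 y) (𝟙 d) (e y d))
        ∘ (fun g' : S.M2 i x (H y d) => S.s20_1 g' u)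
        ∘ (Equiv.ofBijective _ ((he y d).2.2.1 i x)).symm := by
    funext g
    show S.s30_1 g u
      = S.map2 (S.s20_1 ((Equiv.ofBijective _ ((he y d).2.2.1 i x)).symm g) u)
          (𝟙 y) (𝟙 d) (e y d)
    conv_lhs => rw [← S.phi2_symm_spec H e he g]
    exact (S.assoc_b_11 _ _ _).symm
  rw [hfun]
  exact ((he y d).2.1 x).comp ((hn1 x (H y d)).comp (Equiv.bijective _))

end Aux

end ShortMultiStruct

open ShortMultiStruct in
/-- **Statement 12** (Proposition 2.5 of Bourke–Lobbia). A closed short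
multicategory `𝔠` — with closed structure given by internal homs `H b c` and
evaluation binary multimaps `e_{b,c} : [b,c], b → c` — is left representable if
and only if it has a nullary map classifier and, for each object `b`, the
functor `[b,-] : C ⥤ C` induced by the closed structure has a left adjoint. -/
theorem stmt_12 {C : Type u} [Category.{v} C] (S : ShortMultiStruct C)
    (H : C → C → C) (e : ∀ b c : C, S.M2 (H b c) b c)
    (he : ∀ b c : C, S.IsHomObj (e b c)) :
    S.LeftRepresentable ↔
      ((∃ (i : C) (u : S.M0 i), S.IsNulClassifier u) ∧
        ∀ b : C, ∃ L : C ⥤ C, Nonempty (L ⊣ S.homFunctor H e he b)) := by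
  constructor
  · rintro ⟨hbin, i, u, hu⟩
    exact ⟨⟨i, u, hu.1⟩, fun b => S.leftAdjoint_of_leftRep H e he hbin b⟩
  · rintro ⟨⟨i, u, hu⟩, hadj⟩
    refine ⟨fun a b => ?_, i, u, S.leftUnivNul_of_closed H e he hu⟩
    obtain ⟨L, ⟨adj⟩⟩ := hadj b
    exact S.leftUnivBin_of_adj H e he adj a
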